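/- Let s₀ > 0 and let F be holomorphic on the strip S := {z ∈ ℂ : |Im z| < s₀}, 2π-periodic (F(z+2π) = F(z)), real-valued on ℝ, and γ-cosine-like, i.e. sup_{z∈S}|F(z) + cos z| ≤ γ for some 0 < γ ≤ (1/4)·min{1, s₀²}. Then: (i) |F'(x)| + |F''(x)| ≥ 1/4 for every x ∈ ℝ; (ii) sup_{z∈S}|F(z)| ≤ γ + cosh s₀; (iii) F has exactly two critical points in (−π, π], both nondegenerate (F'' ≠ 0 there): a local minimum lying in (−π/6, π/6) and a local maximum lying in (−π, −5π/6) ∪ (5π/6, π]; moreover F' ≥ 1/4 on [π/6, 5π/6] and F' ≤ −1/4 on [−5π/6, −π/6]; (iv) the two critical values differ by at least 1/4. -/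

import Mathlib

open Set Real Complex Metric Filter


/-- The restriction of `F : ℂ → ℂ` to the reals, taking real parts. -/
noncomputable def reRestrict (F : ℂ → ℂ) : ℝ → ℝ := fun x => (F x).re


private lemma limR (a C s₀ : ℝ) (hs : 0 < s₀) (n : ℕ)
    (h : ∀ R, 0 < R → R < s₀ → a ≤ C / R ^ n) : a ≤ C / s₀ ^ n := by
  have h1 : Filter.Tendsto (fun R : ℝ => C / R ^ n) (nhdsWithin s₀ (Set.Iio s₀))
      (nhds (C / s₀ ^ n)) := by
    apply Filter.Tendsto.mono_left _ nhdsWithin_le_nhds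
    exact (ContinuousAt.div continuousAt_const ((continuous_pow n).continuousAt)
      (pow_ne_zero n hs.ne')).tendsto
  refine ge_of_tendsto h1 ?_
  filter_upwards [Ioo_mem_nhdsLT (by linarith : s₀ / 2 < s₀)] with R hR
  exact h R (by linarith [hR.1]) hR.2

private lemma cauchy_coeff_bound {g : ℂ → ℂ} {s₀ γ : ℝ} (hs : 0 < s₀) (hγ : 0 ≤ γ)
    (hd : ∀ z : ℂ, |z.im| < s₀ → DifferentiableAt ℂ g z)
    (hb : ∀ z : ℂ, |z.im| < s₀ → ‖g z‖ ≤ γ) (x : ℝ) (n : ℕ) :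
    ‖iteratedDeriv n g (x : ℂ)‖ ≤ n.factorial * γ / s₀ ^ n := by
  apply limR _ _ _ hs n
  intro R hR0 hRs
  set R' : NNReal := ⟨R, hR0.le⟩ with hR'
  have hcoe : (R' : ℝ) = R := rfl
  have hsub : Metric.closedBall (x : ℂ) R ⊆ {z : ℂ | |z.im| < s₀} := by
    intro z hz
    simp only [Metric.mem_closedBall, Complex.dist_eq] at hz
    have h1 : |z.im| = |(z - (x : ℂ)).im| := by simp
    have h2 : |(z - (x : ℂ)).im| ≤ ‖z - (x : ℂ)‖ := Complex.abs_im_le_norm _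
    simp only [Set.mem_setOf_eq]
    calc |z.im| ≤ ‖z - (x : ℂ)‖ := h1 ▸ h2
      _ ≤ R := hz
      _ < s₀ := hRs
  have hdOn : DifferentiableOn ℂ g (Metric.closedBall (x : ℂ) R') :=
    fun z hz => (hd z (hsub hz)).differentiableWithinAt
  have hps : HasFPowerSeriesOnBall g (cauchyPowerSeries g x R') x R' :=
    hdOn.hasFPowerSeriesOnBall (by exact_mod_cast hR0)
  have hcont : Continuous fun θ : ℝ => ‖g (circleMap x R θ)‖ := by
    apply Continuous.norm
    rw [continuous_iff_continuousAt]
    intro θ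
    exact ((hd _ (hsub (circleMap_mem_closedBall _ hR0.le θ))).continuousAt).comp
      (continuous_circleMap x R).continuousAt
  have hint : (∫ θ in (0:ℝ)..(2 * π), ‖g (circleMap x R θ)‖) ≤ 2 * π * γ := by
    have := intervalIntegral.integral_mono_on (by positivity : (0:ℝ) ≤ 2 * π)
      (hcont.intervalIntegrable _ _) (intervalIntegrable_const (c := γ) (μ := MeasureTheory.volume))
      (fun θ _ => hb _ (hsub (circleMap_mem_closedBall _ hR0.le θ)))
    simpa [mul_comm] using this
  have hcoef := norm_cauchyPowerSeries_le g x R' n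
  have h1 : ‖cauchyPowerSeries g (x:ℂ) (R':ℝ) n‖ ≤ γ * (R⁻¹) ^ n := by
    refine hcoef.trans ?_
    rw [hcoe, abs_of_pos hR0]
    apply mul_le_mul_of_nonneg_right _ (by positivity)
    calc (2 * π)⁻¹ * ∫ θ in (0:ℝ)..(2 * π), ‖g (circleMap x R θ)‖
        ≤ (2 * π)⁻¹ * (2 * π * γ) := by
          apply mul_le_mul_of_nonneg_left hint (by positivity)
      _ = γ := by field_simp
  have h2 : iteratedDeriv n g (x : ℂ) =
      n.factorial • (cauchyPowerSeries g x R' n fun _ => (1:ℂ)) := by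
    rw [iteratedDeriv_eq_iteratedFDeriv, ← hps.factorial_smul 1 n]
  rw [h2]
  have h3 : ‖cauchyPowerSeries g (x:ℂ) (R':ℝ) n (fun _ => (1:ℂ))‖ ≤
      ‖cauchyPowerSeries g (x:ℂ) (R':ℝ) n‖ := by
    have := (cauchyPowerSeries g (x:ℂ) (R':ℝ) n).le_opNorm (fun _ => (1:ℂ))
    simpa using this
  calc ‖n.factorial • (cauchyPowerSeries g (x:ℂ) (R':ℝ) n fun _ => (1:ℂ))‖
      = (n.factorial : ℝ) * ‖cauchyPowerSeries g (x:ℂ) (R':ℝ) n fun _ => (1:ℂ)‖ := by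
        rw [← Nat.cast_smul_eq_nsmul ℝ, norm_smul]; simp
    _ ≤ (n.factorial : ℝ) * (γ * (R⁻¹) ^ n) := by
        apply mul_le_mul_of_nonneg_left (h3.trans h1) (by positivity)
    _ = n.factorial * γ / R ^ n := by rw [inv_pow]; ring


private lemma deriv_shift {f : ℝ → ℝ} {c : ℝ} (hf : ∀ x, f (x + c) = f x)
    (hd : ∀ x : ℝ, DifferentiableAt ℝ f x) (x : ℝ) : deriv f (x + c) = deriv f x := by
  have h1 : HasDerivAt (fun y : ℝ => f (y + c)) (deriv f (x + c) * 1) x :=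
    HasDerivAt.comp x (hd (x + c)).hasDerivAt ((hasDerivAt_id x).add_const c)
  have h2 : (fun y : ℝ => f (y + c)) = f := funext hf
  rw [h2, mul_one] at h1
  exact h1.deriv.symm

private lemma sin_lb : ∀ x ∈ Icc (π / 6) (5 * π / 6), (1/2 : ℝ) ≤ Real.sin x := by
  intro x hx
  have h1 : Real.sin x = Real.cos (π / 2 - x) := (Real.cos_pi_div_two_sub x).symm
  have h2 : Real.cos (π / 2 - x) = Real.cos |π / 2 - x| := (Real.cos_abs _).symm
  have h3 : |π / 2 - x| ≤ π / 3 := by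
    rw [abs_le]; constructor <;> [linarith [hx.2]; linarith [hx.1]]
  have h4 := Real.cos_le_cos_of_nonneg_of_le_pi (abs_nonneg (π / 2 - x))
    (by linarith [Real.pi_pos] : π / 3 ≤ π) h3
  rw [Real.cos_pi_div_three] at h4
  linarith

private lemma cos_lb : ∀ x ∈ Icc (-(π / 6)) (π / 6), Real.sqrt 3 / 2 ≤ Real.cos x := by
  intro x hx
  have h2 : Real.cos x = Real.cos |x| := (Real.cos_abs _).symm
  have h3 : |x| ≤ π / 6 := abs_le.2 ⟨hx.1, hx.2⟩
  have h4 := Real.cos_le_cos_of_nonneg_of_le_pi (abs_nonneg x)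
    (by linarith [Real.pi_pos] : π / 6 ≤ π) h3
  rw [Real.cos_pi_div_six] at h4
  linarith

private lemma cos_ub : ∀ x ∈ Icc (5 * π / 6) (7 * π / 6), Real.cos x ≤ -(Real.sqrt 3 / 2) := by
  intro x hx
  have h1 : Real.cos (x - π) = -Real.cos x := by
    rw [show x - π = -(π - x) by ring, Real.cos_neg, Real.cos_pi_sub]
  have h2 : Real.sqrt 3 / 2 ≤ Real.cos (x - π) :=
    cos_lb _ ⟨by linarith [hx.1], by linarith [hx.2]⟩
  linarith

private lemma one_lt_sqrt3 : (1 : ℝ) < Real.sqrt 3 := by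
  nlinarith [Real.sq_sqrt (by norm_num : (3:ℝ) ≥ 0), Real.sqrt_nonneg 3]

set_option maxHeartbeats 1000000 in
theorem stmt_11 (s₀ : ℝ) (hs₀ : 0 < s₀) (F : ℂ → ℂ)
    (hol : ∀ z : ℂ, |z.im| < s₀ → DifferentiableAt ℂ F z)
    (hper : ∀ z : ℂ, |z.im| < s₀ → F (z + (2 * Real.pi : ℝ)) = F z)
    (hreal : ∀ x : ℝ, (F x).im = 0)
    (γ : ℝ) (hγ0 : 0 < γ) (hγ : γ ≤ (1 / 4) * min 1 (s₀ ^ 2))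
    (hbound : ∀ z : ℂ, |z.im| < s₀ → ‖F z + Complex.cos z‖ ≤ γ) :
    -- (i)
    (∀ x : ℝ, 1 / 4 ≤ |deriv (reRestrict F) x| + |deriv (deriv (reRestrict F)) x|) ∧
    -- (ii)
    (∀ z : ℂ, |z.im| < s₀ → ‖F z‖ ≤ γ + Real.cosh s₀) ∧
    -- (iii) and (iv)
    (∃ a b : ℝ,
      a ∈ Set.Ioo (-(Real.pi / 6)) (Real.pi / 6) ∧
      (b ∈ Set.Ioo (-Real.pi) (-(5 * Real.pi / 6)) ∨
        b ∈ Set.Ioc (5 * Real.pi / 6) Real.pi) ∧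
      deriv (reRestrict F) a = 0 ∧ deriv (reRestrict F) b = 0 ∧
      deriv (deriv (reRestrict F)) a ≠ 0 ∧ deriv (deriv (reRestrict F)) b ≠ 0 ∧
      IsLocalMin (reRestrict F) a ∧ IsLocalMax (reRestrict F) b ∧
      (∀ x ∈ Set.Ioc (-Real.pi) Real.pi, deriv (reRestrict F) x = 0 → x = a ∨ x = b) ∧
      1 / 4 ≤ |reRestrict F a - reRestrict F b|) ∧
    (∀ x ∈ Set.Icc (Real.pi / 6) (5 * Real.pi / 6), 1 / 4 ≤ deriv (reRestrict F) x) ∧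
    (∀ x ∈ Set.Icc (-(5 * Real.pi / 6)) (-(Real.pi / 6)),
      deriv (reRestrict F) x ≤ -(1 / 4)) := by
  have pi_pos := Real.pi_pos
  set f := reRestrict F with hfdef
  -- basic complex differentiability facts
  have hstrip : ∀ x : ℝ, |((x : ℂ)).im| < s₀ := by intro x; simpa using hs₀
  have hopen : IsOpen {z : ℂ | |z.im| < s₀} := by
    have : {z : ℂ | |z.im| < s₀} = Complex.im ⁻¹' (Ioo (-s₀) s₀) := by
      ext z; simp [abs_lt]
    rw [this]; exact isOpen_Ioo.preimage Complex.continuous_im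
  have hmem : ∀ x : ℝ, {z : ℂ | |z.im| < s₀} ∈ nhds (x : ℂ) :=
    fun x => hopen.mem_nhds (hstrip x)
  have hFdo : DifferentiableOn ℂ F {z : ℂ | |z.im| < s₀} :=
    fun z hz => (hol z hz).differentiableWithinAt
  have hFan : AnalyticOnNhd ℂ F {z : ℂ | |z.im| < s₀} := hFdo.analyticOnNhd hopen
  have hol' : ∀ z : ℂ, |z.im| < s₀ → DifferentiableAt ℂ (deriv F) z :=
    fun z hz => (hFan.deriv z hz).differentiableAt
  have hol'' : ∀ z : ℂ, |z.im| < s₀ → DifferentiableAt ℂ (deriv (deriv F)) z :=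
    fun z hz => ((hFan.deriv.deriv) z hz).differentiableAt
  -- real derivatives
  have hF'x : ∀ x : ℝ, HasDerivAt f ((deriv F x).re) x :=
    fun x => (hol _ (hstrip x)).hasDerivAt.real_of_complex
  have hdf : deriv f = fun x : ℝ => (deriv F x).re := funext fun x => (hF'x x).deriv
  have hF''x : ∀ x : ℝ, HasDerivAt (deriv f) ((deriv (deriv F) x).re) x := by
    intro x
    rw [hdf]
    exact (hol' _ (hstrip x)).hasDerivAt.real_of_complex
  have hddf : deriv (deriv f) = fun x : ℝ => (deriv (deriv F) x).re :=
    funext fun x => (hF''x x).deriv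
  -- the error function g
  set g : ℂ → ℂ := fun z => F z + Complex.cos z with hgdef
  have hgd : ∀ z : ℂ, |z.im| < s₀ → DifferentiableAt ℂ g z :=
    fun z hz => (hol z hz).add (Complex.differentiable_cos z)
  have hg' : ∀ x : ℝ, deriv g x = deriv F x + -Complex.sin x :=
    fun x => ((hol _ (hstrip x)).hasDerivAt.add (Complex.hasDerivAt_cos x)).deriv
  have hg'strip : ∀ z : ℂ, |z.im| < s₀ → deriv g z = deriv F z + -Complex.sin z :=
    fun z hz => ((hol _ hz).hasDerivAt.add (Complex.hasDerivAt_cos z)).deriv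
  have hg'' : ∀ x : ℝ, deriv (deriv g) x = deriv (deriv F) x + -Complex.cos x := by
    intro x
    have heq : deriv g =ᶠ[nhds (x : ℂ)] fun z => deriv F z + -Complex.sin z := by
      filter_upwards [hmem x] with z hz using hg'strip z hz
    rw [heq.deriv_eq]
    exact ((hol' _ (hstrip x)).hasDerivAt.add (Complex.hasDerivAt_sin x).neg).deriv
  -- Cauchy bounds
  have hgb : ∀ z : ℂ, |z.im| < s₀ → ‖g z‖ ≤ γ := fun z hz => by
    exact hbound z hz
  have d1 : ∀ x : ℝ, ‖deriv g (x : ℂ)‖ ≤ γ / s₀ := by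
    intro x
    have := cauchy_coeff_bound hs₀ hγ0.le hgd hgb x 1
    simpa [iteratedDeriv_one] using this
  have d2 : ∀ x : ℝ, ‖deriv (deriv g) (x : ℂ)‖ ≤ 2 * γ / s₀ ^ 2 := by
    intro x
    have := cauchy_coeff_bound hs₀ hγ0.le hgd hgb x 2
    rw [iteratedDeriv_succ, iteratedDeriv_one] at this
    calc ‖deriv (deriv g) (x:ℂ)‖ ≤ (Nat.factorial 2) * γ / s₀ ^ 2 := this
      _ = 2 * γ / s₀ ^ 2 := by norm_num [Nat.factorial]
  -- constants
  have c1 : γ / s₀ ≤ 1 / 4 := by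
    rcases le_total s₀ 1 with h | h
    · have : γ ≤ s₀ ^ 2 / 4 := le_trans hγ (by
        have := min_le_right (1:ℝ) (s₀^2); linarith)
      rw [div_le_iff₀ hs₀]
      nlinarith
    · have : γ ≤ 1 / 4 := le_trans hγ (by
        have := min_le_left (1:ℝ) (s₀^2); linarith)
      rw [div_le_iff₀ hs₀]
      nlinarith
  have c2 : 2 * γ / s₀ ^ 2 ≤ 1 / 2 := by
    have : γ ≤ s₀ ^ 2 / 4 := le_trans hγ (by
      have := min_le_right (1:ℝ) (s₀^2); linarith)
    rw [div_le_iff₀ (by positivity)]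
    nlinarith
  have hγ4 : γ ≤ 1 / 4 := le_trans hγ (by
    have := min_le_left (1:ℝ) (s₀^2); linarith)
  -- real estimates
  have E1 : ∀ x : ℝ, |deriv f x - Real.sin x| ≤ 1 / 4 := by
    intro x
    have h1 : deriv f x - Real.sin x = (deriv g (x:ℂ)).re := by
      rw [hdf, hg']
      simp [Complex.sin_ofReal_re]
      ring
    rw [h1]
    exact le_trans (Complex.abs_re_le_norm _) (le_trans (d1 x) c1)
  have E2 : ∀ x : ℝ, |deriv (deriv f) x - Real.cos x| ≤ 1 / 2 := by
    intro x
    have h1 : deriv (deriv f) x - Real.cos x = (deriv (deriv g) (x:ℂ)).re := by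
      rw [hddf, hg'']
      simp [Complex.cos_ofReal_re]
      ring
    rw [h1]
    exact le_trans (Complex.abs_re_le_norm _) (le_trans (d2 x) c2)
  have E0 : ∀ x : ℝ, |f x + Real.cos x| ≤ γ := by
    intro x
    have h1 : f x + Real.cos x = ((F x + Complex.cos x)).re := by
      simp [hfdef, reRestrict, Complex.cos_ofReal_re]
    rw [h1]
    exact le_trans (Complex.abs_re_le_norm _) (hbound _ (hstrip x))
  -- differentiability/continuity of f and deriv f
  have hfd : ∀ x : ℝ, DifferentiableAt ℝ f x := fun x => (hF'x x).differentiableAt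
  have hfd' : ∀ x : ℝ, DifferentiableAt ℝ (deriv f) x := fun x => (hF''x x).differentiableAt
  have contf : Continuous f := by
    rw [continuous_iff_continuousAt]; exact fun x => (hfd x).continuousAt
  have contf' : Continuous (deriv f) := by
    rw [continuous_iff_continuousAt]; exact fun x => (hfd' x).continuousAt
  -- periodicity
  have perf : ∀ x : ℝ, f (x + 2 * π) = f x := by
    intro x
    have h := hper (x : ℂ) (hstrip x)
    have hc : ((x : ℂ) + ((2 * π : ℝ) : ℂ)) = (((x + 2 * π : ℝ)) : ℂ) := by push_cast; ring
    simp only [hfdef, reRestrict]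
    rw [← hc, h]
  have perf' : ∀ x : ℝ, deriv f (x + 2 * π) = deriv f x := fun x => deriv_shift perf hfd x
  have perf'' : ∀ x : ℝ, deriv (deriv f) (x + 2 * π) = deriv (deriv f) x :=
    fun x => deriv_shift perf' hfd' x
  -- (i)
  have goal_i : ∀ x : ℝ, 1 / 4 ≤ |deriv f x| + |deriv (deriv f) x| := by
    intro x
    have hs1 : |Real.sin x| ≤ |deriv f x| + 1 / 4 := by
      calc |Real.sin x| = |deriv f x - (deriv f x - Real.sin x)| := by congr 1; ring
        _ ≤ |deriv f x| + |deriv f x - Real.sin x| := abs_sub _ _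
        _ ≤ |deriv f x| + 1 / 4 := by linarith [E1 x]
    have hs2 : |Real.cos x| ≤ |deriv (deriv f) x| + 1 / 2 := by
      calc |Real.cos x| = |deriv (deriv f) x - (deriv (deriv f) x - Real.cos x)| := by
            congr 1; ring
        _ ≤ |deriv (deriv f) x| + |deriv (deriv f) x - Real.cos x| := abs_sub _ _
        _ ≤ |deriv (deriv f) x| + 1 / 2 := by linarith [E2 x]
    have hsc : (1 : ℝ) ≤ |Real.sin x| + |Real.cos x| := by
      nlinarith [Real.sin_sq_add_cos_sq x, abs_nonneg (Real.sin x), abs_nonneg (Real.cos x),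
        _root_.sq_abs (Real.sin x), _root_.sq_abs (Real.cos x),
        mul_nonneg (abs_nonneg (Real.sin x)) (abs_nonneg (Real.cos x))]
    linarith
  -- (ii)
  have goal_ii : ∀ z : ℂ, |z.im| < s₀ → ‖F z‖ ≤ γ + Real.cosh s₀ := by
    intro z hz
    have hcos : ‖Complex.cos z‖ ≤ Real.cosh s₀ := by
      have h1 : Complex.cos z = (Complex.exp (z * Complex.I) + Complex.exp (-z * Complex.I)) / 2 :=
        rfl
      have h2 : ‖Complex.cos z‖ ≤
          (Real.exp (-z.im) + Real.exp z.im) / 2 := by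
        rw [h1, norm_div, Complex.norm_two]
        have htri := norm_add_le (Complex.exp (z * Complex.I))
          (Complex.exp (-z * Complex.I))
        have e1 : ‖Complex.exp (z * Complex.I)‖ = Real.exp (-z.im) := by
          rw [Complex.norm_exp, Complex.mul_I_re]
        have e2 : ‖Complex.exp (-z * Complex.I)‖ = Real.exp z.im := by
          rw [Complex.norm_exp, Complex.mul_I_re]
          simp
        rw [e1, e2] at htri
        linarith
      have h3' : (Real.exp (-z.im) + Real.exp z.im) / 2 = Real.cosh z.im := by
        rw [Real.cosh_eq]; ring
      have h4 : Real.cosh z.im ≤ Real.cosh s₀ := by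
        apply Real.cosh_le_cosh.2
        rw [abs_of_pos hs₀]
        exact hz.le
      linarith
    have h3 : F z = (F z + Complex.cos z) + -Complex.cos z := by ring
    calc ‖F z‖ = ‖(F z + Complex.cos z) + -Complex.cos z‖ := by rw [← h3]
      _ ≤ ‖F z + Complex.cos z‖ + ‖-Complex.cos z‖ :=
          norm_add_le _ _
      _ = ‖F z + Complex.cos z‖ + ‖Complex.cos z‖ := by rw [norm_neg]
      _ ≤ γ + Real.cosh s₀ := add_le_add (hbound z hz) hcos
  -- sign bounds on deriv f, deriv (deriv f)
  have P1 : ∀ x ∈ Icc (π / 6) (5 * π / 6), 1 / 4 ≤ deriv f x := by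
    intro x hx
    have h1 := sin_lb x hx
    have h2 := abs_le.1 (E1 x)
    linarith [h2.1]
  have P2 : ∀ x ∈ Icc (-(5 * π / 6)) (-(π / 6)), deriv f x ≤ -(1 / 4) := by
    intro x hx
    have hsx : Real.sin x ≤ -(1 / 2) := by
      have := sin_lb (-x) ⟨by linarith [hx.2], by linarith [hx.1]⟩
      rw [Real.sin_neg] at this; linarith
    have h2 := abs_le.1 (E1 x)
    linarith [h2.2]
  have sq3 := one_lt_sqrt3
  have Q1 : ∀ x ∈ Icc (-(π / 6)) (π / 6), 0 < deriv (deriv f) x := by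
    intro x hx
    have h := cos_lb x hx
    have h2 := abs_le.1 (E2 x)
    linarith [h2.1]
  have Q2 : ∀ x ∈ Icc (5 * π / 6) (7 * π / 6), deriv (deriv f) x < 0 := by
    intro x hx
    have h := cos_ub x hx
    have h2 := abs_le.1 (E2 x)
    linarith [h2.2]
  -- strict monotonicity of deriv f
  have mono1 : StrictMonoOn (deriv f) (Icc (-(π / 6)) (π / 6)) := by
    apply strictMonoOn_of_deriv_pos (convex_Icc _ _) contf'.continuousOn
    intro x hx
    rw [interior_Icc] at hx
    exact Q1 x ⟨hx.1.le, hx.2.le⟩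
  have anti1 : StrictAntiOn (deriv f) (Icc (5 * π / 6) (7 * π / 6)) := by
    apply strictAntiOn_of_deriv_neg (convex_Icc _ _) contf'.continuousOn
    intro x hx
    rw [interior_Icc] at hx
    exact Q2 x ⟨hx.1.le, hx.2.le⟩
  have hlt1 : -(π / 6) < π / 6 := by linarith
  have hlt2 : (5 * π / 6) < 7 * π / 6 := by linarith
  have hva : deriv f (-(π / 6)) < 0 := by
    have := P2 (-(π / 6)) ⟨by linarith, le_refl _⟩; linarith
  have hvb : 0 < deriv f (π / 6) := by
    have := P1 (π / 6) ⟨le_refl _, by linarith⟩; linarith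
  have hvc : 0 < deriv f (5 * π / 6) := by
    have := P1 (5 * π / 6) ⟨by linarith, le_refl _⟩; linarith
  have h76 : deriv f (7 * π / 6) = deriv f (-(5 * π / 6)) := by
    have h := perf' (-(5 * π / 6))
    rw [show -(5 * π / 6) + 2 * π = 7 * π / 6 by ring] at h
    exact h
  have hvd : deriv f (7 * π / 6) < 0 := by
    have := P2 (-(5 * π / 6)) ⟨le_refl _, by linarith⟩
    rw [h76]; linarith
  -- existence of critical points
  obtain ⟨a, haI, ha0⟩ : ∃ a ∈ Ioo (-(π / 6)) (π / 6), deriv f a = 0 := by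
    obtain ⟨a, ha, ha'⟩ := intermediate_value_Ioo hlt1.le contf'.continuousOn
      (⟨hva, hvb⟩ : (0:ℝ) ∈ Ioo (deriv f (-(π / 6))) (deriv f (π / 6)))
    exact ⟨a, ha, ha'⟩
  obtain ⟨b', hbI', hb0'⟩ : ∃ b' ∈ Ioo (5 * π / 6) (7 * π / 6), deriv f b' = 0 := by
    obtain ⟨b', hb, hbb⟩ := intermediate_value_Ioo' hlt2.le contf'.continuousOn
      (⟨hvd, hvc⟩ : (0:ℝ) ∈ Ioo (deriv f (7 * π / 6)) (deriv f (5 * π / 6)))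
    exact ⟨b', hb, hbb⟩
  have haIcc : a ∈ Icc (-(π / 6)) (π / 6) := ⟨haI.1.le, haI.2.le⟩
  have hbIcc : b' ∈ Icc (5 * π / 6) (7 * π / 6) := ⟨hbI'.1.le, hbI'.2.le⟩
  have hfa'' : deriv (deriv f) a ≠ 0 := (Q1 a haIcc).ne'
  have hfb'' : deriv (deriv f) b' ≠ 0 := (Q2 b' hbIcc).ne
  -- local extrema
  have hmin : IsLocalMin f a := by
    apply isLocalMin_of_deriv_Ioo haI.1 haI.2 contf.continuousAt
      (fun x _ => (hfd x).differentiableWithinAt) (fun x _ => (hfd x).differentiableWithinAt)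
    · intro x hx
      have := mono1 ⟨hx.1.le, le_trans hx.2.le haIcc.2⟩ haIcc hx.2
      linarith
    · intro x hx
      have := mono1 haIcc ⟨le_trans haIcc.1 hx.1.le, hx.2.le⟩ hx.1
      linarith
  have hmax' : IsLocalMax f b' := by
    apply isLocalMax_of_deriv_Ioo hbI'.1 hbI'.2 contf.continuousAt
      (fun x _ => (hfd x).differentiableWithinAt) (fun x _ => (hfd x).differentiableWithinAt)
    · intro x hx
      have := anti1 ⟨hx.1.le, le_trans hx.2.le hbIcc.2⟩ hbIcc hx.2
      linarith
    · intro x hx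
      have := anti1 hbIcc ⟨le_trans hbIcc.1 hx.1.le, hx.2.le⟩ hx.1
      linarith
  -- uniqueness in each window
  have uniq1 : ∀ x ∈ Ioo (-(π / 6)) (π / 6), deriv f x = 0 → x = a := by
    intro x hx hx0
    exact mono1.injOn ⟨hx.1.le, hx.2.le⟩ haIcc (by rw [hx0, ha0])
  have uniq2 : ∀ x ∈ Ioo (5 * π / 6) (7 * π / 6), deriv f x = 0 → x = b' := by
    intro x hx hx0
    exact anti1.injOn ⟨hx.1.le, hx.2.le⟩ hbIcc (by rw [hx0, hb0'])
  -- critical values gap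
  have hfa_val : f a ≤ -(Real.sqrt 3 / 2) + 1 / 4 := by
    have h := abs_le.1 (E0 a)
    have := cos_lb a haIcc
    linarith [h.2, hγ4]
  have hfb_val : Real.sqrt 3 / 2 - 1 / 4 ≤ f b' := by
    have h := abs_le.1 (E0 b')
    have := cos_ub b' hbIcc
    linarith [h.1, hγ4]
  have hgap : 1 / 4 ≤ |f a - f b'| := by
    have h1 : 1 / 4 ≤ f b' - f a := by linarith [sq3]
    calc (1:ℝ) / 4 ≤ f b' - f a := h1
      _ ≤ |f b' - f a| := le_abs_self _
      _ = |f a - f b'| := abs_sub_comm _ _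
  rcases le_or_gt b' π with hble | hbgt
  · -- b = b'
    refine ⟨goal_i, goal_ii, ⟨a, b', haI, Or.inr ⟨hbI'.1, hble⟩, ha0, hb0', hfa'', hfb'',
      hmin, hmax', ?_, hgap⟩, P1, P2⟩
    intro x hxIoc hx0
    rcases lt_or_ge x (-(5 * π / 6)) with h1 | h1
    · exfalso
      have hx2 : x + 2 * π ∈ Ioo (5 * π / 6) (7 * π / 6) := ⟨by linarith [hxIoc.1], by linarith⟩
      have hz : deriv f (x + 2 * π) = 0 := by rw [perf' x]; exact hx0
      have := uniq2 _ hx2 hz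
      linarith [hxIoc.1]
    rcases le_or_gt x (-(π / 6)) with h2 | h2
    · exfalso; have := P2 x ⟨h1, h2⟩; rw [hx0] at this; linarith
    rcases lt_or_ge x (π / 6) with h3 | h3
    · exact Or.inl (uniq1 x ⟨h2, h3⟩ hx0)
    rcases le_or_gt x (5 * π / 6) with h4 | h4
    · exfalso; have := P1 x ⟨h3, h4⟩; rw [hx0] at this; linarith
    · exact Or.inr (uniq2 x ⟨h4, by linarith [hxIoc.2]⟩ hx0)
  · -- b = b' - 2π
    have hbmem : b' - 2 * π ∈ Ioo (-π) (-(5 * π / 6)) :=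
      ⟨by linarith, by linarith [hbI'.2]⟩
    have hb02 : deriv f (b' - 2 * π) = 0 := by
      have := perf' (b' - 2 * π)
      rw [show b' - 2 * π + 2 * π = b' by ring] at this
      rw [← this]; exact hb0'
    have hfb2'' : deriv (deriv f) (b' - 2 * π) ≠ 0 := by
      have := perf'' (b' - 2 * π)
      rw [show b' - 2 * π + 2 * π = b' by ring] at this
      rw [← this]; exact hfb''
    have hfbval : f (b' - 2 * π) = f b' := by
      have := perf (b' - 2 * π)
      rw [show b' - 2 * π + 2 * π = b' by ring] at this
      exact this.symm
    have hmax2 : IsLocalMax f (b' - 2 * π) := by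
      have ht : Filter.Tendsto (fun y : ℝ => y + 2 * π) (nhds (b' - 2 * π)) (nhds b') := by
        have h := (continuous_add_right (2 * π)).tendsto (b' - 2 * π)
        rw [show b' - 2 * π + 2 * π = b' by ring] at h
        exact h
      have h2 := ht.eventually hmax'
      show ∀ᶠ y in nhds (b' - 2 * π), f y ≤ f (b' - 2 * π)
      filter_upwards [h2] with y hy
      rw [perf y] at hy
      rw [hfbval]; exact hy
    have hgap2 : 1 / 4 ≤ |f a - f (b' - 2 * π)| := by rw [hfbval]; exact hgap
    refine ⟨goal_i, goal_ii, ⟨a, b' - 2 * π, haI, Or.inl hbmem, ha0, hb02, hfa'', hfb2'',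
      hmin, hmax2, ?_, hgap2⟩, P1, P2⟩
    intro x hxIoc hx0
    rcases lt_or_ge x (-(5 * π / 6)) with h1 | h1
    · have hx2 : x + 2 * π ∈ Ioo (5 * π / 6) (7 * π / 6) := ⟨by linarith [hxIoc.1], by linarith⟩
      have hz : deriv f (x + 2 * π) = 0 := by rw [perf' x]; exact hx0
      have heq := uniq2 _ hx2 hz
      exact Or.inr (by linarith)
    rcases le_or_gt x (-(π / 6)) with h2 | h2
    · exfalso; have := P2 x ⟨h1, h2⟩; rw [hx0] at this; linarith
    rcases lt_or_ge x (π / 6) with h3 | h3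
    · exact Or.inl (uniq1 x ⟨h2, h3⟩ hx0)
    rcases le_or_gt x (5 * π / 6) with h4 | h4
    · exfalso; have := P1 x ⟨h3, h4⟩; rw [hx0] at this; linarith
    · exfalso
      have := uniq2 x ⟨h4, by linarith [hxIoc.2]⟩ hx0
      linarith [hxIoc.2]
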